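/- Let m ≥ 1 and let X₁, …, X_m be elements of a commutative ring. Let A be the 2m×2m matrix whose i-th row (for 1 ≤ i ≤ m) is (Xᵢ⁰, Xᵢ¹, …, Xᵢ^{2m−1}) and whose (m+i)-th row (for 1 ≤ i ≤ m) is (1·Xᵢ⁰, 2·Xᵢ¹, …, 2m·Xᵢ^{2m−1}). Then det A = (−1)^{m(m−1)/2} · (∏_{i=1}^m Xᵢ) · ∏_{1 ≤ i < j ≤ m} (X_j − Xᵢ)⁴. -/

import Mathlib

open Finset Matrix

namespace ConfVdm

variable {R : Type*} [CommRing R] {σ : Type*}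

lemma pderiv_prod {α : Type*} [DecidableEq α] (i : σ) (s : Finset α)
    (g : α → MvPolynomial σ R) :
    MvPolynomial.pderiv i (∏ a ∈ s, g a)
      = ∑ a ∈ s, (∏ b ∈ s.erase a, g b) * MvPolynomial.pderiv i (g a) := by
  induction s using Finset.induction with
  | empty => simp
  | @insert a s ha ih =>
      rw [Finset.prod_insert ha, MvPolynomial.pderiv_mul, ih, Finset.mul_sum,
        Finset.sum_insert ha, Finset.erase_insert ha]
      congr 1
      · exact mul_comm _ _
      · refine Finset.sum_congr rfl fun b hb => ?_
        have hba : b ≠ a := by rintro rfl; exact ha hb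
        rw [Finset.erase_insert_of_ne hba.symm,
          Finset.prod_insert (fun h => ha (Finset.mem_of_mem_erase h))]
        ring

lemma pderiv_det_col {n : Type*} [DecidableEq n] [Fintype n] (i : σ)
    (M : Matrix n n (MvPolynomial σ R)) :
    MvPolynomial.pderiv i M.det
      = ∑ c, (M.updateCol c fun r => MvPolynomial.pderiv i (M r c)).det := by
  rw [det_apply', map_sum]
  have key : ∀ σp : Equiv.Perm n,
      MvPolynomial.pderiv i (((Equiv.Perm.sign σp : ℤ) : MvPolynomial σ R) * ∏ k, M (σp k) k)
        = ∑ c, ((Equiv.Perm.sign σp : ℤ) : MvPolynomial σ R) *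
            ((∏ b ∈ Finset.univ.erase c, M (σp b) b) * MvPolynomial.pderiv i (M (σp c) c)) := by
    intro σp
    rw [show (((Equiv.Perm.sign σp : ℤ) : MvPolynomial σ R))
        = MvPolynomial.C (((Equiv.Perm.sign σp : ℤ) : R)) by rw [map_intCast]]
    rw [MvPolynomial.pderiv_C_mul, pderiv_prod, Finset.mul_sum]
  rw [Finset.sum_congr rfl fun σp _ => key σp, Finset.sum_comm]
  refine Finset.sum_congr rfl fun c _ => ?_
  rw [det_apply']
  refine Finset.sum_congr rfl fun σp _ => ?_
  have : ∏ k, (M.updateCol c fun r => MvPolynomial.pderiv i (M r c)) (σp k) k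
      = MvPolynomial.pderiv i (M (σp c) c) * ∏ b ∈ Finset.univ.erase c, M (σp b) b := by
    rw [← Finset.mul_prod_erase Finset.univ _ (Finset.mem_univ c)]
    congr 1
    · simp [Matrix.updateCol_self]
    · refine Finset.prod_congr rfl fun b hb => ?_
      rw [Matrix.updateCol_ne (Finset.ne_of_mem_erase hb)]
  rw [this]
  ring

lemma pderiv_det_row {n : Type*} [DecidableEq n] [Fintype n] (i : σ)
    (M : Matrix n n (MvPolynomial σ R)) :
    MvPolynomial.pderiv i M.det
      = ∑ r, (M.updateRow r fun j => MvPolynomial.pderiv i (M r j)).det := by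
  conv_lhs => rw [← det_transpose M]
  rw [pderiv_det_col]
  refine Finset.sum_congr rfl fun r _ => ?_
  rw [show (fun c => MvPolynomial.pderiv i (Mᵀ c r)) = fun j => MvPolynomial.pderiv i (M r j) from rfl,
    Matrix.updateCol_transpose, det_transpose]


section Main

variable {m : ℕ} (X : Fin m → R)

/-- exponent of column `j` -/
def kp (j : Fin m ⊕ Fin m) : ℕ := (finSumFinEquiv j : ℕ)

/-- The matrix with bottom rows differentiated at positions in `T`. -/
noncomputable def Mat (T : Finset (Fin m)) :
    Matrix (Fin m ⊕ Fin m) (Fin m ⊕ Fin m) (MvPolynomial (Fin m) R) :=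
  Matrix.of fun i j =>
    Sum.elim (fun a => MvPolynomial.C (X a) ^ kp j)
      (fun b => if b ∈ T then ((kp j + 1 : ℕ) : MvPolynomial (Fin m) R) *
            MvPolynomial.X b ^ kp j
          else MvPolynomial.X b ^ (kp j + 1)) i

lemma pderiv_Mat_inl (T : Finset (Fin m)) (i : Fin m) (a : Fin m) (j) :
    MvPolynomial.pderiv i (Mat X T (Sum.inl a) j) = 0 := by
  show MvPolynomial.pderiv i (MvPolynomial.C (X a) ^ kp j) = 0
  rw [← map_pow, MvPolynomial.pderiv_C]

lemma pderiv_Mat_inr_ne (T : Finset (Fin m)) {i b : Fin m} (hb : b ≠ i) (j) :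
    MvPolynomial.pderiv i (Mat X T (Sum.inr b) j) = 0 := by
  show MvPolynomial.pderiv i (if b ∈ T then _ else _) = 0
  split_ifs with h
  · rw [show ((kp j + 1 : ℕ) : MvPolynomial (Fin m) R)
      = MvPolynomial.C ((kp j + 1 : ℕ) : R) by rw [map_natCast]]
    rw [MvPolynomial.pderiv_C_mul, MvPolynomial.pderiv_pow,
      MvPolynomial.pderiv_X_of_ne hb, mul_zero, mul_zero]
  · rw [MvPolynomial.pderiv_pow, MvPolynomial.pderiv_X_of_ne hb, mul_zero]

lemma pderiv_Mat_step (T : Finset (Fin m)) (i : Fin m) (hi : i ∉ T) :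
    MvPolynomial.pderiv i (Mat X T).det = (Mat X (insert i T)).det := by
  rw [pderiv_det_row]
  rw [Finset.sum_eq_single (Sum.inr i)]
  · congr 1
    refine Matrix.ext fun r j => ?_
    rcases eq_or_ne r (Sum.inr i) with rfl | hr
    · rw [Matrix.updateRow_self]
      show MvPolynomial.pderiv i (if i ∈ T then _ else _) = _
      rw [if_neg hi, MvPolynomial.pderiv_pow, MvPolynomial.pderiv_X_self, mul_one,
        Nat.add_sub_cancel]
      show _ = if i ∈ insert i T then _ else _
      rw [if_pos (Finset.mem_insert_self i T)]
    · rw [Matrix.updateRow_ne hr]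
      cases r with
      | inl a => rfl
      | inr b =>
        have hbi : b ≠ i := by rintro rfl; exact hr rfl
        show (if b ∈ T then _ else _) = (if b ∈ insert i T then _ else _)
        have : (b ∈ insert i T) ↔ (b ∈ T) := by simp [Finset.mem_insert, hbi]
        simp only [this]
  · intro r _ hr
    apply det_eq_zero_of_row_eq_zero r
    intro j
    rw [Matrix.updateRow_self]
    cases r with
    | inl a => exact pderiv_Mat_inl X T i a j
    | inr b =>
      have hbi : b ≠ i := by rintro rfl; exact hr rfl
      exact pderiv_Mat_inr_ne X T hbi j
  · intro h; exact absurd (Finset.mem_univ _) h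

/-- iterated partial derivative -/
noncomputable def Dfold (l : List (Fin m)) (p : MvPolynomial (Fin m) R) : MvPolynomial (Fin m) R :=
  l.foldl (fun q i => MvPolynomial.pderiv i q) p

@[simp] lemma Dfold_nil (p : MvPolynomial (Fin m) R) : Dfold [] p = p := rfl

@[simp] lemma Dfold_cons (i : Fin m) (l : List (Fin m)) (p : MvPolynomial (Fin m) R) :
    Dfold (i :: l) p = Dfold l (MvPolynomial.pderiv i p) := rfl

lemma Dfold_add (l : List (Fin m)) (p q : MvPolynomial (Fin m) R) :
    Dfold l (p + q) = Dfold l p + Dfold l q := by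
  induction l generalizing p q with
  | nil => rfl
  | cons i t ih => rw [Dfold_cons, map_add, ih]; rfl

lemma keyA (l : List (Fin m)) (hl : l.Nodup) :
    ∀ T : Finset (Fin m), (∀ i ∈ l, i ∉ T) →
      Dfold l (Mat X T).det = (Mat X (T ∪ l.toFinset)).det := by
  induction l with
  | nil => intro T _; simp
  | cons i t ih =>
      intro T hT
      have hset : insert i T ∪ t.toFinset = T ∪ (i :: t).toFinset := by
        ext b
        simp only [Finset.mem_union, Finset.mem_insert, List.toFinset_cons]
        tauto
      rw [Dfold_cons, pderiv_Mat_step X T i (hT i List.mem_cons_self),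
        ih (List.Nodup.of_cons hl) (insert i T) ?_, hset]
      intro k hk
      simp only [Finset.mem_insert, not_or]
      exact ⟨by rintro rfl; exact (List.nodup_cons.mp hl).1 hk,
        hT k (List.mem_cons_of_mem i hk)⟩

lemma keyC (l : List (Fin m)) (hl : l.Nodup) :
    ∀ (T : Finset (Fin m)), l.toFinset ⊆ T → ∀ H : MvPolynomial (Fin m) R,
      MvPolynomial.eval X (Dfold l
          ((∏ k ∈ T, (MvPolynomial.X k - MvPolynomial.C (X k))) * H))
        = if T = l.toFinset then MvPolynomial.eval X H else 0 := by
  induction l with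
  | nil =>
      intro T _ H
      rw [Dfold_nil, _root_.map_mul, map_prod]
      simp only [List.toFinset_nil]
      rcases eq_or_ne T (∅ : Finset (Fin m)) with rfl | hT
      · simp
      · refine Eq.trans ?_ (if_neg hT).symm
        obtain ⟨k, hk⟩ := Finset.nonempty_iff_ne_empty.mpr hT
        rw [Finset.prod_eq_zero hk (by simp), zero_mul]
  | cons i t ih =>
      intro T hsub H
      have hiT : i ∈ T := hsub (by simp)
      have hit : i ∉ t.toFinset := by
        simp only [List.mem_toFinset]
        exact (List.nodup_cons.mp hl).1
      have htsub : t.toFinset ⊆ T :=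
        Finset.Subset.trans (fun x hx => by
          simp only [List.toFinset_cons, Finset.mem_insert]; right; exact hx) hsub
      have hderiv : MvPolynomial.pderiv i
            ((∏ k ∈ T, (MvPolynomial.X k - MvPolynomial.C (X k))) * H)
          = (∏ k ∈ T.erase i, (MvPolynomial.X k - MvPolynomial.C (X k))) * H
            + (∏ k ∈ T, (MvPolynomial.X k - MvPolynomial.C (X k)))
              * MvPolynomial.pderiv i H := by
        rw [MvPolynomial.pderiv_mul]
        congr 1
        rw [← Finset.mul_prod_erase T _ hiT, MvPolynomial.pderiv_mul]
        have h1 : MvPolynomial.pderiv i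
            (MvPolynomial.X i - MvPolynomial.C (X i) : MvPolynomial (Fin m) R) = 1 := by
          rw [map_sub, MvPolynomial.pderiv_X_self, MvPolynomial.pderiv_C, sub_zero]
        have h2 : MvPolynomial.pderiv i
            (∏ k ∈ T.erase i, (MvPolynomial.X k - MvPolynomial.C (X k))) = 0 := by
          rw [pderiv_prod]
          refine Finset.sum_eq_zero fun k hk => ?_
          rw [map_sub, MvPolynomial.pderiv_X_of_ne (Finset.ne_of_mem_erase hk),
            MvPolynomial.pderiv_C, sub_zero, mul_zero]
        rw [h1, h2, one_mul, mul_zero, add_zero]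
      rw [Dfold_cons, hderiv, Dfold_add, map_add,
        ih (List.Nodup.of_cons hl) (T.erase i)
          (Finset.subset_erase.mpr ⟨htsub, hit⟩) H,
        ih (List.Nodup.of_cons hl) T htsub (MvPolynomial.pderiv i H)]
      have hne : T ≠ t.toFinset := by
        rintro rfl; exact hit hiT
      rw [if_neg hne, add_zero, List.toFinset_cons]
      by_cases h : T.erase i = t.toFinset
      · rw [if_pos h, if_pos (by rw [← h, Finset.insert_erase hiT])]
      · rw [if_neg h, if_neg (fun hT => h (by rw [hT, Finset.erase_insert hit]))]

/-- the node values -/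
noncomputable def vv : Fin m ⊕ Fin m → MvPolynomial (Fin m) R :=
  Sum.elim (fun a => MvPolynomial.C (X a)) (fun b => MvPolynomial.X b)

@[simp] lemma vv_inl (a : Fin m) : vv X (Sum.inl a) = MvPolynomial.C (X a) := rfl
@[simp] lemma vv_inr (b : Fin m) : vv X (Sum.inr b) = MvPolynomial.X b := rfl

lemma lt_ll (a b : Fin m) : (finSumFinEquiv (Sum.inl a : Fin m ⊕ Fin m)
    < finSumFinEquiv (Sum.inl b : Fin m ⊕ Fin m)) ↔ a < b := by
  rw [finSumFinEquiv_apply_left, finSumFinEquiv_apply_left, Fin.lt_iff_val_lt_val,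
    Fin.lt_iff_val_lt_val, Fin.coe_castAdd, Fin.coe_castAdd]

lemma lt_rr (a b : Fin m) : (finSumFinEquiv (Sum.inr a : Fin m ⊕ Fin m)
    < finSumFinEquiv (Sum.inr b : Fin m ⊕ Fin m)) ↔ a < b := by
  rw [finSumFinEquiv_apply_right, finSumFinEquiv_apply_right, Fin.lt_iff_val_lt_val,
    Fin.lt_iff_val_lt_val, Fin.coe_natAdd, Fin.coe_natAdd]
  omega

lemma lt_lr (a b : Fin m) : finSumFinEquiv (Sum.inl a : Fin m ⊕ Fin m)
    < finSumFinEquiv (Sum.inr b : Fin m ⊕ Fin m) := by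
  rw [finSumFinEquiv_apply_left, finSumFinEquiv_apply_right, Fin.lt_iff_val_lt_val,
    Fin.coe_castAdd, Fin.coe_natAdd]
  have := a.isLt
  omega

lemma not_lt_rl (a b : Fin m) : ¬ finSumFinEquiv (Sum.inr b : Fin m ⊕ Fin m)
    < finSumFinEquiv (Sum.inl a : Fin m ⊕ Fin m) := by
  rw [finSumFinEquiv_apply_left, finSumFinEquiv_apply_right, Fin.lt_iff_val_lt_val,
    Fin.coe_castAdd, Fin.coe_natAdd]
  have := a.isLt
  omega

/-- the cofactor polynomial -/
noncomputable def Hpoly : MvPolynomial (Fin m) R :=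
  (∏ b, MvPolynomial.X b)
  * (∏ a, ∏ b, if a < b then (MvPolynomial.C (X b) - MvPolynomial.C (X a)) else 1)
  * (∏ b, ∏ a ∈ Finset.univ.erase b, (MvPolynomial.X b - MvPolynomial.C (X a)))
  * (∏ a, ∏ b, if a < b then (MvPolynomial.X b - MvPolynomial.X a) else 1)

lemma detMatEmpty :
    (Mat X (∅ : Finset (Fin m))).det
      = (∏ k, (MvPolynomial.X k - MvPolynomial.C (X k))) * Hpoly X := by
  have hdet1 : (Mat X (∅ : Finset (Fin m))).det
      = (∏ b, (MvPolynomial.X b : MvPolynomial (Fin m) R))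
        * (Matrix.of fun i j => vv X i ^ kp j).det := by
    have hM : Mat X (∅ : Finset (Fin m)) = Matrix.of fun i j =>
        (Sum.elim (fun _ : Fin m => (1 : MvPolynomial (Fin m) R))
          (fun b => MvPolynomial.X b) i) * (vv X i ^ kp j) := by
      refine Matrix.ext fun i j => ?_
      cases i with
      | inl a =>
          show MvPolynomial.C (X a) ^ kp j = 1 * (vv X (Sum.inl a)) ^ kp j
          rw [one_mul]; rfl
      | inr b =>
          show (if b ∈ (∅ : Finset (Fin m))
              then ((kp j + 1 : ℕ) : MvPolynomial (Fin m) R) * MvPolynomial.X b ^ kp j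
              else MvPolynomial.X b ^ (kp j + 1))
            = MvPolynomial.X b * (vv X (Sum.inr b)) ^ kp j
          rw [if_neg (Finset.notMem_empty b)]
          show MvPolynomial.X b ^ (kp j + 1) = MvPolynomial.X b * MvPolynomial.X b ^ kp j
          rw [pow_succ]; ring
    rw [hM]
    refine (Matrix.det_mul_column (Sum.elim (fun _ : Fin m => (1 : MvPolynomial (Fin m) R))
            (fun b => MvPolynomial.X b)) _).trans ?_
    rw [Fintype.prod_sum_type]
    congr 1 <;> simp
  have hdet2 : (Matrix.of fun i j => vv X i ^ kp j).det
      = (Matrix.vandermonde (fun k : Fin (m + m) => vv X (finSumFinEquiv.symm k))).det := by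
    rw [← Matrix.det_submatrix_equiv_self finSumFinEquiv]
    congr 1
    refine Matrix.ext fun i j => ?_
    simp [Matrix.vandermonde, kp]
  have hvdm := Matrix.det_vandermonde (fun k : Fin (m + m) => vv X (finSumFinEquiv.symm k))
  have hchain : (∏ i : Fin (m + m), ∏ j ∈ Finset.Ioi i,
        ((vv X (finSumFinEquiv.symm j)) - (vv X (finSumFinEquiv.symm i))))
      = (∏ a, ∏ b, if a < b then (MvPolynomial.C (X b) - MvPolynomial.C (X a)) else 1)
        * (∏ a : Fin m, ∏ b : Fin m, (MvPolynomial.X b - MvPolynomial.C (X a)))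
        * (∏ a, ∏ b, if a < b then (MvPolynomial.X b - MvPolynomial.X a) else 1) := by
    calc (∏ i : Fin (m + m), ∏ j ∈ Finset.Ioi i,
        ((vv X (finSumFinEquiv.symm j)) - (vv X (finSumFinEquiv.symm i))))
        = ∏ i : Fin (m + m), ∏ j : Fin (m + m),
            (if i < j then (vv X (finSumFinEquiv.symm j)) - (vv X (finSumFinEquiv.symm i))
              else 1) := by
          refine Finset.prod_congr rfl fun i _ => ?_
          rw [show Finset.Ioi i = Finset.univ.filter (fun j => i < j) by ext j; simp,
            Finset.prod_filter]
      _ = ∏ i' : Fin m ⊕ Fin m, ∏ j' : Fin m ⊕ Fin m,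
            (if finSumFinEquiv i' < finSumFinEquiv j' then vv X j' - vv X i' else 1) := by
          refine (Fintype.prod_equiv finSumFinEquiv _ _ fun i' => ?_).symm
          refine Fintype.prod_equiv finSumFinEquiv _ _ fun j' => ?_
          simp
      _ = (∏ a : Fin m, (∏ b : Fin m, (if a < b
              then (MvPolynomial.C (X b) - MvPolynomial.C (X a)) else 1))
            * (∏ b : Fin m, (MvPolynomial.X b - MvPolynomial.C (X a))))
          * (∏ b : Fin m, ∏ b' : Fin m, (if b < b'
              then (MvPolynomial.X b' - MvPolynomial.X b) else 1)) := by
          rw [Fintype.prod_sum_type]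
          refine congrArg₂ (· * ·) (Finset.prod_congr rfl fun a _ => ?_)
            (Finset.prod_congr rfl fun b _ => ?_)
          · rw [Fintype.prod_sum_type]
            refine congrArg₂ (· * ·) (Finset.prod_congr rfl fun b _ => ?_)
              (Finset.prod_congr rfl fun b _ => ?_)
            · simp only [lt_ll, vv_inl]
            · rw [if_pos (lt_lr a b)]
              simp only [vv_inl, vv_inr]
          · rw [Fintype.prod_sum_type]
            have h1 : (∏ a : Fin m, (if finSumFinEquiv (Sum.inr b) < finSumFinEquiv (Sum.inl a)
                then vv X (Sum.inl a) - vv X (Sum.inr b) else 1)) = 1 := by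
              refine Finset.prod_eq_one fun a _ => ?_
              rw [if_neg (not_lt_rl a b)]
            rw [h1, one_mul]
            refine Finset.prod_congr rfl fun b' _ => ?_
            simp only [lt_rr, vv_inr]
      _ = _ := by
          rw [Finset.prod_mul_distrib]
  have hB2 : (∏ a : Fin m, ∏ b : Fin m, (MvPolynomial.X b - MvPolynomial.C (X a)))
      = (∏ k, (MvPolynomial.X k - MvPolynomial.C (X k)))
        * (∏ b, ∏ a ∈ Finset.univ.erase b, (MvPolynomial.X b - MvPolynomial.C (X a))) := by
    rw [Finset.prod_comm]
    rw [Finset.prod_congr rfl (fun b _ =>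
      (Finset.mul_prod_erase Finset.univ (fun a => MvPolynomial.X b - MvPolynomial.C (X a))
        (Finset.mem_univ b)).symm)]
    rw [Finset.prod_mul_distrib]
  rw [hdet1, hdet2, hvdm, hchain, hB2, Hpoly]
  ring

noncomputable def e2 : (Fin m ⊕ Fin m) ≃ Fin (2 * m) :=
  finSumFinEquiv.trans (finCongr (two_mul m).symm)

lemma e2_val_inl (a : Fin m) : ((e2 (Sum.inl a) : Fin (2 * m)) : ℕ) = (a : ℕ) := by
  simp [e2]

lemma e2_val_inr (b : Fin m) : ((e2 (Sum.inr b) : Fin (2 * m)) : ℕ) = m + (b : ℕ) := by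
  simp [e2, Nat.add_comm]

lemma e2_val (j : Fin m ⊕ Fin m) : ((e2 j : Fin (2 * m)) : ℕ) = kp j := by
  cases j <;> simp [e2, kp]

lemma evalH :
    MvPolynomial.eval X (Hpoly X)
      = (-1) ^ (m * (m - 1) / 2) * (∏ i, X i) *
          ∏ p ∈ Finset.univ.filter (fun p : Fin m × Fin m => p.1 < p.2),
            (X p.2 - X p.1) ^ 4 := by
  have hV : ∀ (f : Fin m → Fin m → MvPolynomial (Fin m) R) (g : Fin m → Fin m → R),
      (∀ a b, MvPolynomial.eval X (f a b) = g a b) →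
      MvPolynomial.eval X (∏ a, ∏ b, f a b) = ∏ a, ∏ b, g a b := by
    intro f g h
    rw [map_prod]
    exact Finset.prod_congr rfl fun a _ => by
      rw [map_prod]; exact Finset.prod_congr rfl fun b _ => h a b
  have heval : MvPolynomial.eval X (Hpoly X)
      = (∏ b, X b)
        * (∏ a, ∏ b, if a < b then (X b - X a) else 1)
        * (∏ b, ∏ a ∈ Finset.univ.erase b, (X b - X a))
        * (∏ a, ∏ b, if a < b then (X b - X a) else 1) := by
    rw [Hpoly, _root_.map_mul, _root_.map_mul, _root_.map_mul]
    congr 1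
    · congr 1
      · congr 1
        · rw [map_prod]; exact Finset.prod_congr rfl fun b _ => by simp
        · refine hV _ _ fun a b => ?_
          rw [apply_ite (MvPolynomial.eval X), map_sub, MvPolynomial.eval_C,
            MvPolynomial.eval_C, _root_.map_one]
      · rw [map_prod]
        refine Finset.prod_congr rfl fun b _ => ?_
        rw [map_prod]
        exact Finset.prod_congr rfl fun a _ => by
          rw [map_sub, MvPolynomial.eval_X, MvPolynomial.eval_C]
    · refine hV _ _ fun a b => ?_
      rw [apply_ite (MvPolynomial.eval X), map_sub, MvPolynomial.eval_X,
        MvPolynomial.eval_X, _root_.map_one]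
  rw [heval]
  -- now a pure computation in R
  set V : R := ∏ a, ∏ b, if a < b then (X b - X a) else 1 with hVdef
  have hD2 : (∏ b, ∏ a ∈ Finset.univ.erase b, (X b - X a))
      = ((-1 : R) ^ (m * (m - 1) / 2)) * V * V := by
    have hsplit : ∀ b : Fin m, (∏ a ∈ Finset.univ.erase b, (X b - X a))
        = (∏ a, if a < b then (X b - X a) else 1)
          * (∏ a, if b < a then (X b - X a) else 1) := by
      intro b
      rw [← Finset.prod_mul_distrib, ← Finset.filter_ne' Finset.univ b, Finset.prod_filter]
      refine Finset.prod_congr rfl fun a _ => ?_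
      rcases lt_trichotomy a b with h | rfl | h
      · rw [if_pos h.ne, if_pos h, if_neg (asymm h), mul_one]
      · rw [if_neg (by simp), if_neg (lt_irrefl a), one_mul]
      · rw [if_pos h.ne', if_neg (asymm h), if_pos h, one_mul]
    rw [Finset.prod_congr rfl fun b _ => hsplit b, Finset.prod_mul_distrib]
    have h1 : (∏ b, ∏ a, if a < b then (X b - X a) else 1) = V := Finset.prod_comm
    have h2 : (∏ b, ∏ a, if b < a then (X b - X a) else 1)
        = ((-1 : R) ^ (m * (m - 1) / 2)) * V := by
      have hterm : ∀ u v : Fin m, (if u < v then (X u - X v) else 1)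
          = (if u < v then (-1 : R) else 1) * (if u < v then (X v - X u) else 1) := by
        intro u v; split_ifs; · ring
        · rw [one_mul]
      calc (∏ b, ∏ a, if b < a then (X b - X a) else 1)
          = ∏ u, ∏ v, ((if u < v then (-1 : R) else 1) * (if u < v then (X v - X u) else 1)) := by
            exact Finset.prod_congr rfl fun u _ => Finset.prod_congr rfl fun v _ => hterm u v
        _ = (∏ u, ∏ v, (if u < v then (-1 : R) else 1)) * V := by
            rw [hVdef, ← Finset.prod_mul_distrib]
            exact Finset.prod_congr rfl fun u _ => Finset.prod_mul_distrib
        _ = ((-1 : R) ^ (m * (m - 1) / 2)) * V := by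
            congr 1
            have hrow : ∀ u : Fin m, (∏ v, if u < v then (-1 : R) else 1)
                = (-1 : R) ^ (m - 1 - (u : ℕ)) := by
              intro u
              rw [← Finset.prod_filter, Finset.prod_const]
              congr 1
              have hIoi : Finset.univ.filter (fun v : Fin m => u < v) = Finset.Ioi u := by
                ext v; simp
              rw [hIoi, Fin.card_Ioi]
            rw [Finset.prod_congr rfl fun u _ => hrow u,
              Finset.prod_pow_eq_pow_sum]
            congr 1
            rw [Fin.sum_univ_eq_sum_range (fun i => m - 1 - i) m,
              Finset.sum_range_reflect (fun i => i) m, Finset.sum_range_id]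
    rw [h1, h2]; ring
  have hfil : (∏ p ∈ Finset.univ.filter (fun p : Fin m × Fin m => p.1 < p.2),
      (X p.2 - X p.1)) = V := by
    rw [Finset.prod_filter, hVdef, Fintype.prod_prod_type]
  rw [hD2, Finset.prod_pow, hfil]
  ring

end Main

end ConfVdm

theorem det_confluent_vandermonde {R : Type*} [CommRing R] (m : ℕ) (hm : 1 ≤ m)
    (X : Fin m → R) :
    Matrix.det (Matrix.of fun i j : Fin (2 * m) =>
      if h : (i : ℕ) < m then X ⟨i, h⟩ ^ (j : ℕ)
      else (((j : ℕ) + 1 : ℕ) : R) * X ⟨(i : ℕ) - m, by have := i.isLt; omega⟩ ^ (j : ℕ))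
    = (-1) ^ (m * (m - 1) / 2) * (∏ i, X i) *
        ∏ p ∈ Finset.univ.filter (fun p : Fin m × Fin m => p.1 < p.2),
          (X p.2 - X p.1) ^ 4 := by
  classical
  have hsub : (Matrix.of fun i j : Fin (2 * m) =>
      if h : (i : ℕ) < m then X ⟨i, h⟩ ^ (j : ℕ)
      else (((j : ℕ) + 1 : ℕ) : R) * X ⟨(i : ℕ) - m, by have := i.isLt; omega⟩
        ^ (j : ℕ)).submatrix (ConfVdm.e2) (ConfVdm.e2)
      = (ConfVdm.Mat X Finset.univ).map (MvPolynomial.eval X) := by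
    refine Matrix.ext fun i j => ?_
    rw [Matrix.submatrix_apply, Matrix.of_apply, Matrix.map_apply]
    cases i with
    | inl a =>
        have h1 : ((ConfVdm.e2 (Sum.inl a) : Fin (2 * m)) : ℕ) < m := by
          rw [ConfVdm.e2_val_inl]; exact a.isLt
        rw [dif_pos h1]
        have hmk : (⟨((ConfVdm.e2 (Sum.inl a) : Fin (2 * m)) : ℕ), h1⟩ : Fin m) = a :=
          Fin.ext (ConfVdm.e2_val_inl a)
        rw [hmk, ConfVdm.e2_val j]
        show X a ^ ConfVdm.kp j
          = MvPolynomial.eval X (MvPolynomial.C (X a) ^ ConfVdm.kp j)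
        rw [map_pow, MvPolynomial.eval_C]
    | inr b =>
        have h1 : ¬ ((ConfVdm.e2 (Sum.inr b) : Fin (2 * m)) : ℕ) < m := by
          rw [ConfVdm.e2_val_inr]; omega
        rw [dif_neg h1]
        have hmk : ∀ h, (⟨((ConfVdm.e2 (Sum.inr b) : Fin (2 * m)) : ℕ) - m, h⟩ : Fin m) = b :=
          fun h => Fin.ext (by
            show ((ConfVdm.e2 (Sum.inr b) : Fin (2 * m)) : ℕ) - m = (b : ℕ)
            rw [ConfVdm.e2_val_inr]; omega)
        rw [hmk, ConfVdm.e2_val j]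
        have hRHS : ConfVdm.Mat X Finset.univ (Sum.inr b) j
            = ((ConfVdm.kp j + 1 : ℕ) : MvPolynomial (Fin m) R)
              * MvPolynomial.X b ^ ConfVdm.kp j := by
          show (if b ∈ Finset.univ then ((ConfVdm.kp j + 1 : ℕ) : MvPolynomial (Fin m) R)
              * MvPolynomial.X b ^ ConfVdm.kp j
            else MvPolynomial.X b ^ (ConfVdm.kp j + 1)) = _
          rw [if_pos (Finset.mem_univ b)]
        rw [hRHS, _root_.map_mul, map_natCast, map_pow, MvPolynomial.eval_X]
  rw [← Matrix.det_submatrix_equiv_self (ConfVdm.e2), hsub]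
  have hd := RingHom.map_det (MvPolynomial.eval X) (ConfVdm.Mat X Finset.univ)
  rw [RingHom.mapMatrix_apply] at hd
  rw [← hd]
  have hU : ((∅ : Finset (Fin m)) ∪ (List.finRange m).toFinset) = Finset.univ := by
    simp [List.toFinset_finRange]
  have hA := ConfVdm.keyA X (List.finRange m) (List.nodup_finRange m) ∅
    (fun i _ => Finset.notMem_empty i)
  rw [hU] at hA
  rw [← hA, ConfVdm.detMatEmpty X,
    ConfVdm.keyC X (List.finRange m) (List.nodup_finRange m) Finset.univ
      (Finset.subset_univ _) (ConfVdm.Hpoly X),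
    if_pos (List.toFinset_finRange m).symm, ConfVdm.evalH X]
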